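/- Let a, k, b, v ∈ ℕ with a < 2^k, b < 2^v and v ≥ 1, let q = a + 2^k·b̄_{v,∞} ∈ ℤ₂, and set m = α(b). Then for every t ∈ ℕ with t ≥ 1, Φ(a + 2^k·b̄_{v,t}) = Φ(q) − (Φ(b̄_{v,∞})/3^{mt+α(a)})·2^{k+tv}, where division by 3^{mt+α(a)} means multiplication by its inverse in ℤ₂. -/

import Mathlib

noncomputable section

/-- The inverse of `3` in the ring of 2-adic integers. -/
def inv3 : ℤ_[2] := Ring.inverse 3

/-- The `j`-th binary digit of a 2-adic integer (as `0` or `1`). -/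
def dig (x : ℤ_[2]) (j : ℕ) : ℕ := if Nat.testBit (x.appr (j + 1)) j then 1 else 0

/-- The number of one digits of `x` in positions `< j`. -/
def digCount (x : ℤ_[2]) (j : ℕ) : ℕ := ∑ i ∈ Finset.range j, dig x i

/-- Bernstein's formula for the 3x+1 conjugacy map `Φ`:
if `x = ∑_i 2^{d_i}` with `d_0 < d_1 < ⋯`, then `Φ x = -∑_i 2^{d_i} 3^{-i}`. -/
def Phi (x : ℤ_[2]) : ℤ_[2] :=
  -∑' j : ℕ, (dig x j : ℤ_[2]) * 2 ^ j * inv3 ^ digCount x j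

/-- `L_k(x)`: the unique natural number `< 2^k` congruent to `x` mod `2^k`. -/
def Lk (k : ℕ) (x : ℤ_[2]) : ℕ := x.appr k

theorem two_pow_dvd_sub_appr (k : ℕ) (x : ℤ_[2]) :
    (2 : ℤ_[2]) ^ k ∣ x - (x.appr k : ℤ_[2]) := by
  have h := PadicInt.appr_spec k x
  rw [Ideal.mem_span_singleton] at h
  exact_mod_cast h

theorem exists_Rk (k : ℕ) (x : ℤ_[2]) :
    ∃ z : ℤ_[2], x = (x.appr k : ℤ_[2]) + 2 ^ k * z := by
  obtain ⟨c, hc⟩ := two_pow_dvd_sub_appr k x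
  exact ⟨c, by rw [← hc]; ring⟩

/-- `R_k(x)`: the unique 2-adic integer with `x = L_k(x) + 2^k · R_k(x)`. -/
def Rk (k : ℕ) (x : ℤ_[2]) : ℤ_[2] := (exists_Rk k x).choose

/-- `α(a)`: the number of ones in the binary expansion of `a`. -/
def alphaNat (a : ℕ) : ℕ := (Nat.bits a).count true

/-- `b̄_{v,∞} = b · ∑_{i=0}^∞ 2^{v i}` as a 2-adic integer. -/
def bbar (b v : ℕ) : ℤ_[2] := (b : ℤ_[2]) * ∑' i : ℕ, (2 : ℤ_[2]) ^ (v * i)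

/-- `b̄_{v,t} = b · ∑_{i=0}^{t-1} 2^{v i}` as a natural number. -/
def bbarFin (b v t : ℕ) : ℕ := b * ∑ i ∈ Finset.range t, 2 ^ (v * i)

/-- The farPoint `fP(x,k)`: the least `r` such that no 2-adic congruent to `x`
mod `2^k` is a fixed point of `Φ` mod `2^{k+r}`, and `∞` if no such `r` exists. -/
def fP (x k : ℕ) : ℕ∞ :=
  sInf ((↑) '' {r : ℕ | ∀ z : ℤ_[2],
    (2 : ℤ_[2]) ^ k ∣ z - (x : ℤ_[2]) → ¬ (2 : ℤ_[2]) ^ (k + r) ∣ Phi z - z})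

end

noncomputable section StmtAux

-- basic cast
lemma two_cast : ((2 : ℕ) : ℤ_[2]) = 2 := by norm_num

lemma nat_eq_of_pow_dvd {m n N : ℕ} (hm : m < 2 ^ N) (hn : n < 2 ^ N)
    (h : (2 : ℤ_[2]) ^ N ∣ (m : ℤ_[2]) - n) : m = n := by
  have h2 : ((2:ℕ) : ℤ_[2]) ^ N ∣ (((m : ℤ) - n : ℤ) : ℤ_[2]) := by push_cast; exact_mod_cast h
  rw [← Ideal.mem_span_singleton, ← PadicInt.norm_le_pow_iff_mem_span_pow,
    PadicInt.norm_int_le_pow_iff_dvd] at h2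
  have := Int.eq_zero_of_abs_lt_dvd h2 (by
    have : ((2:ℕ):ℤ)^N = (2:ℤ)^N := by norm_num
    rw [this]
    rw [abs_lt]; omega)
  omega

lemma dig_congr {x y : ℤ_[2]} {j : ℕ} (h : (2 : ℤ_[2]) ^ (j + 1) ∣ x - y) :
    dig x j = dig y j := by
  have h1 := two_pow_dvd_sub_appr (j+1) x
  have h2 := two_pow_dvd_sub_appr (j+1) y
  have heq : x.appr (j+1) = y.appr (j+1) := by
    refine nat_eq_of_pow_dvd (PadicInt.appr_lt x (j+1)) (PadicInt.appr_lt y (j+1)) ?_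
    have : ((x.appr (j+1) : ℤ_[2]) - y.appr (j+1)) =
        (x - y) - (x - x.appr (j+1)) + (y - y.appr (j+1)) := by ring
    rw [this]
    exact dvd_add (dvd_sub h h1) h2
  unfold dig; rw [heq]

lemma appr_natCast (n k : ℕ) : ((n : ℤ_[2])).appr k = n % 2 ^ k := by
  refine nat_eq_of_pow_dvd (PadicInt.appr_lt _ k) (Nat.mod_lt _ (by positivity)) ?_
  have h1 := two_pow_dvd_sub_appr k (n : ℤ_[2])
  have h2 : (2 : ℤ_[2]) ^ k ∣ ((n : ℤ_[2]) - (n % 2^k : ℕ)) := by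
    refine ⟨(n / 2^k : ℕ), ?_⟩
    have : (n : ℤ_[2]) = ((2^k * (n/2^k) + n % 2^k : ℕ) : ℤ_[2]) := by rw [Nat.div_add_mod]
    rw [this]; push_cast; ring
  have : ((((n:ℤ_[2]).appr k : ℕ) : ℤ_[2]) - ((n % 2^k : ℕ) : ℤ_[2])) =
      ((n:ℤ_[2]) - (n % 2^k : ℕ)) - ((n:ℤ_[2]) - (n:ℤ_[2]).appr k) := by ring
  rw [this]; exact dvd_sub h2 h1

lemma dig_natCast (n j : ℕ) : dig (n : ℤ_[2]) j = if n.testBit j then 1 else 0 := by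
  unfold dig
  rw [appr_natCast, Nat.testBit_mod_two_pow]
  simp

lemma testBit_add_mul_high (n N w s : ℕ) (hn : n < 2 ^ N) :
    (n + 2 ^ N * w).testBit (N + s) = w.testBit s := by
  rw [Nat.testBit_eq_decide_div_mod_eq, Nat.testBit_eq_decide_div_mod_eq, pow_add,
    ← Nat.div_div_eq_div_mul, Nat.add_mul_div_left _ _ (by positivity : 0 < 2^N),
    Nat.div_eq_of_lt hn, zero_add]

lemma testBit_add_mul_low (n N w j : ℕ) (hj : j < N) :
    (n + 2 ^ N * w).testBit j = n.testBit j := by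
  have h1 : (n + 2^N*w).testBit j = ((n + 2^N*w) % 2^(j+1)).testBit j := by
    rw [Nat.testBit_mod_two_pow]; simp
  have h2 : (n + 2^N*w) % 2^(j+1) = n % 2^(j+1) := by
    obtain ⟨c, hc⟩ : 2^(j+1) ∣ 2^N * w := Dvd.dvd.mul_right (pow_dvd_pow 2 hj) w
    rw [hc, Nat.add_mul_mod_self_left]
  rw [h1, h2, Nat.testBit_mod_two_pow]
  simp


-- summability
lemma norm_two_pow (j : ℕ) : ‖(2 : ℤ_[2]) ^ j‖ = (1/2 : ℝ) ^ j := by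
  induction j with
  | zero => simp
  | succ n ih =>
    rw [pow_succ, pow_succ, norm_mul, ih]
    congr 1
    have : (2 : ℤ_[2]) = ((2:ℕ) : ℤ_[2]) := by norm_num
    rw [this, PadicInt.norm_p]
    norm_num

lemma summable_phi (x : ℤ_[2]) :
    Summable (fun j => (dig x j : ℤ_[2]) * 2 ^ j * inv3 ^ digCount x j) := by
  refine Summable.of_norm_bounded (g := fun j => (1/2:ℝ)^j)
    (summable_geometric_of_lt_one (by norm_num) (by norm_num)) (fun j => ?_)
  calc ‖(dig x j : ℤ_[2]) * 2 ^ j * inv3 ^ digCount x j‖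
      ≤ ‖(dig x j : ℤ_[2]) * 2 ^ j‖ * 1 := by
        rw [norm_mul]
        exact mul_le_mul_of_nonneg_left (PadicInt.norm_le_one _) (norm_nonneg _)
    _ ≤ 1 * ‖(2:ℤ_[2])^j‖ := by
        rw [mul_one, norm_mul]
        exact mul_le_mul_of_nonneg_right (PadicInt.norm_le_one _) (norm_nonneg _)
    _ = (1/2:ℝ)^j := by rw [one_mul, norm_two_pow]

lemma summable_geom_pow {v : ℕ} (hv : 1 ≤ v) :
    Summable (fun i => (2 : ℤ_[2]) ^ (v * i)) := by
  refine Summable.of_norm_bounded (g := fun i => (1/2:ℝ)^i)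
    (summable_geometric_of_lt_one (by norm_num) (by norm_num)) (fun i => ?_)
  rw [norm_two_pow]
  exact pow_le_pow_of_le_one (by norm_num) (by norm_num) (Nat.le_mul_of_pos_left i hv)

-- alphaNat
lemma alphaNat_zero : alphaNat 0 = 0 := by unfold alphaNat; simp

lemma alphaNat_two_mul_add (n r : ℕ) (hr : r < 2) :
    alphaNat (2 * n + r) = alphaNat n + r := by
  unfold alphaNat
  interval_cases r
  · rcases Nat.eq_zero_or_pos n with h | h
    · simp [h]
    · rw [Nat.add_zero, Nat.bit0_bits n (by omega)]
      simp
  · rw [Nat.bit1_bits]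
    simp

lemma alphaNat_eq_sum {n N : ℕ} (hn : n < 2 ^ N) :
    alphaNat n = ∑ j ∈ Finset.range N, (if n.testBit j then 1 else 0) := by
  induction N generalizing n with
  | zero => interval_cases n; simp [alphaNat_zero]
  | succ N ih =>
    have hd : n = 2 * (n / 2) + n % 2 := by omega
    have h2 : n / 2 < 2 ^ N := by
      rw [pow_succ] at hn; omega
    rw [Finset.sum_range_succ']
    have e1 : ∀ j, n.testBit (j + 1) = (n/2).testBit j := by
      intro j
      rw [Nat.testBit_succ]
    simp only [e1, Nat.testBit_zero]
    rw [← ih h2]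
    conv_lhs => rw [hd, alphaNat_two_mul_add _ _ (Nat.mod_lt _ (by norm_num))]
    rcases Nat.mod_two_eq_zero_or_one n with h | h <;> simp [h]

lemma alphaNat_add_mul {a k : ℕ} (m : ℕ) (ha : a < 2 ^ k) :
    alphaNat (a + 2 ^ k * m) = alphaNat a + alphaNat m := by
  obtain ⟨M, hM⟩ : ∃ M, m < 2 ^ M := ⟨m, Nat.lt_two_pow_self⟩
  have hlt : a + 2 ^ k * m < 2 ^ (k + M) := by
    rw [pow_add]
    calc a + 2^k * m ≤ (2^k - 1) + 2^k * (2^M - 1) := by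
          have := Nat.mul_le_mul_left (2^k) (by omega : m ≤ 2^M - 1); omega
      _ < 2^k * 2^M := by
          have h1 : 0 < 2^k := by positivity
          have h2 : 0 < 2^M := by positivity
          rw [Nat.mul_sub_one]
          have : 2^k ≤ 2^k * 2^M := Nat.le_mul_of_pos_right _ h2
          omega
  rw [alphaNat_eq_sum hlt, alphaNat_eq_sum ha, alphaNat_eq_sum hM,
    Finset.sum_range_add]
  congr 1
  · exact Finset.sum_congr rfl fun j hj => by
      rw [testBit_add_mul_low _ _ _ _ (Finset.mem_range.mp hj)]
  · exact Finset.sum_congr rfl fun s _ => by rw [testBit_add_mul_high _ _ _ _ ha]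


lemma dig_low {n N : ℕ} (z : ℤ_[2]) {j : ℕ} (hj : j < N) :
    dig ((n : ℤ_[2]) + 2 ^ N * z) j = dig (n : ℤ_[2]) j := by
  refine dig_congr ?_
  have : ((n : ℤ_[2]) + 2 ^ N * z) - n = 2 ^ N * z := by ring
  rw [this]
  exact Dvd.dvd.mul_right (pow_dvd_pow 2 hj) z

lemma dig_high {n N : ℕ} (hn : n < 2 ^ N) (z : ℤ_[2]) (s : ℕ) :
    dig ((n : ℤ_[2]) + 2 ^ N * z) (N + s) = dig z s := by
  set w := z.appr (s + 1) with hw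
  have h1 : dig ((n : ℤ_[2]) + 2 ^ N * z) (N + s) = dig ((n + 2 ^ N * w : ℕ) : ℤ_[2]) (N + s) := by
    refine dig_congr ?_
    have he : ((n : ℤ_[2]) + 2 ^ N * z) - ((n + 2 ^ N * w : ℕ) : ℤ_[2]) = 2 ^ N * (z - w) := by
      push_cast; ring
    rw [he, show N+s+1 = N+(s+1) from rfl, pow_add 2 N (s+1)]
    exact mul_dvd_mul (dvd_refl _) (two_pow_dvd_sub_appr (s+1) z)
  rw [h1, dig_natCast, testBit_add_mul_high _ _ _ _ hn]
  unfold dig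
  rfl

lemma digCount_low {n N : ℕ} (z : ℤ_[2]) {j : ℕ} (hj : j ≤ N) :
    digCount ((n : ℤ_[2]) + 2 ^ N * z) j = digCount (n : ℤ_[2]) j := by
  unfold digCount
  exact Finset.sum_congr rfl fun i hi =>
    dig_low z (lt_of_lt_of_le (Finset.mem_range.mp hi) hj)

lemma digCount_natCast_eq_alpha {n N : ℕ} (hn : n < 2 ^ N) :
    digCount (n : ℤ_[2]) N = alphaNat n := by
  unfold digCount
  rw [alphaNat_eq_sum hn]
  exact Finset.sum_congr rfl fun j _ => by rw [dig_natCast]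

lemma digCount_high {n N : ℕ} (hn : n < 2 ^ N) (z : ℤ_[2]) (s : ℕ) :
    digCount ((n : ℤ_[2]) + 2 ^ N * z) (N + s) = alphaNat n + digCount z s := by
  unfold digCount
  rw [Finset.sum_range_add]
  congr 1
  · rw [← digCount_natCast_eq_alpha hn]
    exact Finset.sum_congr rfl fun i hi => dig_low z (Finset.mem_range.mp hi)
  · exact Finset.sum_congr rfl fun i _ => by rw [dig_high hn]

lemma dig_natCast_high {n N : ℕ} (hn : n < 2 ^ N) (s : ℕ) :
    dig (n : ℤ_[2]) (N + s) = 0 := by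
  rw [dig_natCast]
  have : n.testBit (N + s) = false :=
    Nat.testBit_lt_two_pow (lt_of_lt_of_le hn (pow_le_pow_right₀ (by norm_num) (by omega)))
  simp [this]

lemma Phi_natCast (n N : ℕ) (hn : n < 2 ^ N) :
    Phi (n : ℤ_[2]) =
      -∑ j ∈ Finset.range N, (dig (n : ℤ_[2]) j : ℤ_[2]) * 2 ^ j * inv3 ^ digCount (n : ℤ_[2]) j := by
  unfold Phi
  congr 1
  refine tsum_eq_sum fun j hj => ?_
  have hj' : N ≤ j := by simp at hj; omega
  obtain ⟨s, rfl⟩ := Nat.exists_eq_add_of_le hj'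
  rw [dig_natCast_high hn]
  simp


lemma phi_split {n N : ℕ} (hn : n < 2 ^ N) (z : ℤ_[2]) :
    Phi ((n : ℤ_[2]) + 2 ^ N * z) = Phi (n : ℤ_[2]) + 2 ^ N * inv3 ^ alphaNat n * Phi z := by
  set x := (n : ℤ_[2]) + 2 ^ N * z with hx
  have key := Summable.sum_add_tsum_nat_add
    (f := fun j => (dig x j : ℤ_[2]) * 2 ^ j * inv3 ^ digCount x j) N (summable_phi x)
  have h1 : ∑ j ∈ Finset.range N, (dig x j : ℤ_[2]) * 2 ^ j * inv3 ^ digCount x j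
      = ∑ j ∈ Finset.range N, (dig (n:ℤ_[2]) j : ℤ_[2]) * 2 ^ j * inv3 ^ digCount (n:ℤ_[2]) j := by
    refine Finset.sum_congr rfl fun j hj => ?_
    have hj' := Finset.mem_range.mp hj
    rw [hx, dig_low z hj', digCount_low z (le_of_lt hj')]
  have h2 : ∀ i : ℕ, (dig x (i + N) : ℤ_[2]) * 2 ^ (i + N) * inv3 ^ digCount x (i + N)
      = (2 ^ N * inv3 ^ alphaNat n) * ((dig z i : ℤ_[2]) * 2 ^ i * inv3 ^ digCount z i) := by
    intro i
    rw [add_comm i N, hx, dig_high hn z i, digCount_high hn z i, pow_add 2 N i, pow_add]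
    ring
  have h3 : ∑' i, (dig x (i + N) : ℤ_[2]) * 2 ^ (i + N) * inv3 ^ digCount x (i + N)
      = (2 ^ N * inv3 ^ alphaNat n) * ∑' i, ((dig z i : ℤ_[2]) * 2 ^ i * inv3 ^ digCount z i) := by
    rw [tsum_congr h2]
    exact (summable_phi z).tsum_mul_left _
  have hPhiz : ∑' i, ((dig z i : ℤ_[2]) * 2 ^ i * inv3 ^ digCount z i) = -Phi z := by
    unfold Phi; rw [neg_neg]
  have hPhix : Phi x =
      -(∑ j ∈ Finset.range N, (dig x j : ℤ_[2]) * 2 ^ j * inv3 ^ digCount x j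
        + ∑' i, (dig x (i + N) : ℤ_[2]) * 2 ^ (i + N) * inv3 ^ digCount x (i + N)) := by
    unfold Phi; rw [key]
  rw [hPhix, h1, h3, hPhiz, Phi_natCast n N hn]
  ring

-- bbarFin facts
lemma bbarFin_succ (b v t : ℕ) : bbarFin b v (t+1) = b + 2 ^ v * bbarFin b v t := by
  unfold bbarFin
  rw [Finset.sum_range_succ']
  rw [Nat.mul_add]
  simp [Finset.mul_sum, Nat.mul_comm, Nat.mul_left_comm, pow_add, Nat.mul_succ, pow_mul]
  ring

lemma bbarFin_lt {b v : ℕ} (hb : b < 2 ^ v) (t : ℕ) : bbarFin b v t < 2 ^ (v * t) := by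
  induction t with
  | zero => simp [bbarFin]
  | succ t ih =>
    rw [bbarFin_succ, Nat.mul_succ, pow_add]
    have h4 : 2 ^ v * (bbarFin b v t + 1) ≤ 2 ^ v * 2 ^ (v*t) := Nat.mul_le_mul_left _ ih
    rw [Nat.mul_add, Nat.mul_one] at h4
    rw [Nat.mul_comm (2^(v*t)) (2^v)]
    omega

lemma alphaNat_bbarFin {b v : ℕ} (hb : b < 2 ^ v) (t : ℕ) :
    alphaNat (bbarFin b v t) = alphaNat b * t := by
  induction t with
  | zero => simp [bbarFin, alphaNat_zero]
  | succ t ih =>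
    rw [bbarFin_succ, alphaNat_add_mul _ hb, ih, Nat.mul_succ]
    ring

lemma bbar_split {b v : ℕ} (hv : 1 ≤ v) (t : ℕ) :
    bbar b v = (bbarFin b v t : ℤ_[2]) + 2 ^ (v * t) * bbar b v := by
  have key := Summable.sum_add_tsum_nat_add (f := fun i => (2:ℤ_[2]) ^ (v * i)) t (summable_geom_pow hv)
  have h2 : ∀ i : ℕ, (2:ℤ_[2]) ^ (v * (i + t)) = 2 ^ (v*t) * 2 ^ (v * i) := by
    intro i; rw [Nat.mul_add, pow_add]; ring
  have h3 : ∑' i, (2:ℤ_[2])^(v*(i+t)) = 2^(v*t) * ∑' i, (2:ℤ_[2])^(v*i) := by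
    rw [tsum_congr h2]; exact (summable_geom_pow hv).tsum_mul_left _
  have h4 : (∑' i, (2:ℤ_[2])^(v*i))
      = ∑ i ∈ Finset.range t, 2^(v*i) + 2^(v*t) * ∑' i, (2:ℤ_[2])^(v*i) := by
    conv_lhs => rw [← key]
    rw [h3]
  conv_lhs => rw [bbar, h4]
  rw [bbar, bbarFin]
  push_cast
  ring


end StmtAux

/-- for `q = a + 2^k·b̄_{v,∞}` and `m = α(b)`,
`Φ(a + 2^k·b̄_{v,t}) = Φ(q) − (Φ(b̄_{v,∞})/3^{mt+α(a)})·2^{k+tv}` for all `t ≥ 1`. -/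
theorem stmt10 (a k b v : ℕ) (ha : a < 2 ^ k) (hb : b < 2 ^ v) (hv : 1 ≤ v)
    (q : ℤ_[2]) (hq : q = (a : ℤ_[2]) + 2 ^ k * bbar b v) (t : ℕ) (ht : 1 ≤ t) :
    Phi ((a : ℤ_[2]) + 2 ^ k * (bbarFin b v t : ℤ_[2])) =
      Phi q - Phi (bbar b v) * inv3 ^ (alphaNat b * t + alphaNat a) * 2 ^ (k + t * v) := by
  set n := a + 2 ^ k * bbarFin b v t with hn
  have hnt : n < 2 ^ (k + v * t) := by
    rw [pow_add]
    have h1 := bbarFin_lt hb t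
    have h2 : 2^k*(bbarFin b v t + 1) ≤ 2^k*2^(v*t) := Nat.mul_le_mul_left _ h1
    rw [Nat.mul_add, Nat.mul_one] at h2
    omega
  have hq' : q = (n : ℤ_[2]) + 2 ^ (k + v*t) * bbar b v := by
    rw [hq]
    conv_lhs => rw [bbar_split hv t]
    push_cast [hn]
    rw [pow_add]
    ring
  have hsplit := phi_split hnt (bbar b v)
  have halpha : alphaNat n = alphaNat a + alphaNat b * t := by
    rw [hn, alphaNat_add_mul _ ha, alphaNat_bbarFin hb]
  have hLHS : (a : ℤ_[2]) + 2 ^ k * (bbarFin b v t : ℤ_[2]) = (n : ℤ_[2]) := by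
    rw [hn]; push_cast; ring
  rw [hLHS, hq', hsplit, halpha, show k + t*v = k + v*t by ring,
    add_comm (alphaNat b * t) (alphaNat a)]
  ring
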